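/- For every weight matrix W = (w_1, …, w_m) ∈ ℝ^{d×m}, the dropout loss decomposes as the classical loss plus an explicit regularizer: L(W) = L̂(W) + (1−q)/(2mq) · Σ_{i=1}^{n} Σ_{r=1}^{m} φ(w_r^⊤ x_i)². -/

import Mathlib

/-- The ReLU activation. -/
noncomputable def relu (z : ℝ) : ℝ := max z 0

/-- The two-layer network `f(W, x) = (1/√m) Σ_r a_r φ(w_r^⊤ x)`. -/
noncomputable def twoNet (m d : ℕ) (a : Fin m → ℝ) (W : Fin m → Fin d → ℝ)
    (x : Fin d → ℝ) : ℝ :=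
  (1 / Real.sqrt m) * ∑ r, a r * relu (∑ k, W r k * x k)

/-- The classical squared loss `L̂(W) = (1/2) Σ_i (f(W, x_i) − y_i)²`. -/
noncomputable def classicalLoss (m d n : ℕ) (a : Fin m → ℝ)
    (x : Fin n → Fin d → ℝ) (y : Fin n → ℝ) (W : Fin m → Fin d → ℝ) : ℝ :=
  (1 / 2) * ∑ i, (twoNet m d a W (x i) - y i) ^ 2

/-- The dropout network `F(W, x, σ) = (1/√m) Σ_r a_r σ_r φ(w_r^⊤ x)`, where the mask is
encoded by `σ : Fin m → Bool`, with `σ_r = 1/q` when `σ r = true` and `σ_r = 0` otherwise. -/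
noncomputable def dropoutNet (m d : ℕ) (q : ℝ) (a : Fin m → ℝ) (σ : Fin m → Bool)
    (W : Fin m → Fin d → ℝ) (x : Fin d → ℝ) : ℝ :=
  (1 / Real.sqrt m) * ∑ r, a r * (if σ r then 1 / q else 0) * relu (∑ k, W r k * x k)

/-- The dropout loss `L(W) = (1/2) E_σ[Σ_i (F(W, x_i, σ) − y_i)²]`, where the `σ_r` are
independent, equal to `1/q` with probability `q` and `0` with probability `1 − q`;
the expectation is written as a finite sum over all masks `σ : Fin m → Bool`. -/
noncomputable def dropoutLoss (m d n : ℕ) (q : ℝ) (a : Fin m → ℝ)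
    (x : Fin n → Fin d → ℝ) (y : Fin n → ℝ) (W : Fin m → Fin d → ℝ) : ℝ :=
  (1 / 2) * ∑ σ : Fin m → Bool,
    (∏ r, if σ r then q else 1 - q) *
      ∑ i, (dropoutNet m d q a σ W (x i) - y i) ^ 2


lemma sum_prod_bool {m : ℕ} (g : Fin m → Bool → ℝ) :
    ∑ σ : Fin m → Bool, ∏ r, g r (σ r) = ∏ r, (g r false + g r true) := by
  have h := Finset.prod_univ_sum (fun _ : Fin m => (Finset.univ : Finset Bool)) g
  rw [Fintype.piFinset_univ] at h
  rw [← h]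
  exact Finset.prod_congr rfl fun r _ => by rw [Fintype.sum_bool]; ring

lemma moment2 {m : ℕ} (q : ℝ) (hq : q ≠ 0) (r s : Fin m) :
    ∑ σ : Fin m → Bool, (∏ t, if σ t then q else 1 - q) *
      ((if σ r then 1/q else 0) * (if σ s then 1/q else 0))
    = if r = s then 1/q else 1 := by
  have key : ∀ σ : Fin m → Bool,
      (∏ t, if σ t then q else 1 - q) *
        ((if σ r then 1/q else 0) * (if σ s then 1/q else 0))
      = ∏ t, ((if σ t then q else 1 - q) *
          ((if t = r then (if σ t then 1/q else 0) else 1) *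
           (if t = s then (if σ t then 1/q else 0) else 1))) := by
    intro σ
    rw [Finset.prod_mul_distrib, Finset.prod_mul_distrib,
      Finset.prod_ite_eq' Finset.univ r (fun t => if σ t then 1/q else 0),
      Finset.prod_ite_eq' Finset.univ s (fun t => if σ t then 1/q else 0)]
    simp
  rw [Finset.sum_congr rfl fun σ _ => key σ,
    sum_prod_bool (fun t b => (if b then q else 1 - q) *
      ((if t = r then (if b then 1/q else 0) else 1) *
       (if t = s then (if b then 1/q else 0) else 1)))]
  by_cases hrs : r = s
  · subst hrs
    rw [if_pos rfl]
    rw [Finset.prod_eq_single r]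
    · simp only [if_pos rfl, if_true, Bool.false_eq_true, if_false]
      field_simp
      ring
    · intro t _ ht; simp [ht]
    · simp
  · rw [if_neg hrs]
    apply Finset.prod_eq_one
    intro t _
    by_cases h1 : t = r
    · subst h1; simp [hrs, hq]
    · by_cases h2 : t = s
      · subst h2; simp [h1, hq]
      · simp [h1, h2]

lemma moment0 {m : ℕ} (q : ℝ) :
    ∑ σ : Fin m → Bool, (∏ t, if σ t then q else 1 - q) = (1 : ℝ) := by
  have := sum_prod_bool (fun (_ : Fin m) (b : Bool) => if b then q else 1 - q)
  simp only [] at this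
  rw [this]
  simp

lemma moment1 {m : ℕ} (q : ℝ) (hq : q ≠ 0) (r : Fin m) :
    ∑ σ : Fin m → Bool, (∏ t, if σ t then q else 1 - q) *
      (if σ r then 1/q else 0) = 1 := by
  have key : ∀ σ : Fin m → Bool,
      (∏ t, if σ t then q else 1 - q) * (if σ r then 1/q else 0)
      = ∏ t, ((if σ t then q else 1 - q) *
          (if t = r then (if σ t then 1/q else 0) else 1)) := by
    intro σ
    rw [Finset.prod_mul_distrib,
      Finset.prod_ite_eq' Finset.univ r (fun t => if σ t then 1/q else 0)]
    simp
  rw [Finset.sum_congr rfl fun σ _ => key σ,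
    sum_prod_bool (fun t b => (if b then q else 1 - q) *
      (if t = r then (if b then 1/q else 0) else 1))]
  apply Finset.prod_eq_one
  intro t _
  by_cases h1 : t = r
  · subst h1; simp [hq]
  · simp [h1]

lemma exp_sq {m : ℕ} (q : ℝ) (hq : q ≠ 0) (c : Fin m → ℝ) (y : ℝ) :
    ∑ σ : Fin m → Bool, (∏ r, if σ r then q else 1 - q) *
      ((∑ r, c r * (if σ r then 1/q else 0)) - y) ^ 2
    = ((∑ r, c r) - y) ^ 2 + (1 - q)/q * ∑ r, c r ^ 2 := by
  have expand : ∀ σ : Fin m → Bool,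
      (∏ r, if σ r then q else 1 - q) *
        ((∑ r, c r * (if σ r then 1/q else 0)) - y) ^ 2
      = (∑ r, ∑ s, c r * c s *
          ((∏ t, if σ t then q else 1 - q) *
            ((if σ r then 1/q else 0) * (if σ s then 1/q else 0))))
        - 2 * y * (∑ r, c r *
            ((∏ t, if σ t then q else 1 - q) * (if σ r then 1/q else 0)))
        + y ^ 2 * (∏ t, if σ t then q else 1 - q) := by
    intro σ
    have hA : (∑ r, ∑ s, c r * c s *
          ((∏ t, if σ t then q else 1 - q) *
            ((if σ r then 1/q else 0) * (if σ s then 1/q else 0))))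
        = (∏ t, if σ t then q else 1 - q) *
          ((∑ r, c r * (if σ r then 1/q else 0)) *
           (∑ r, c r * (if σ r then 1/q else 0))) := by
      rw [Finset.sum_mul_sum, Finset.mul_sum]
      refine Finset.sum_congr rfl fun r _ => ?_
      rw [Finset.mul_sum]
      exact Finset.sum_congr rfl fun s _ => by ring
    have hB : (∑ r, c r *
          ((∏ t, if σ t then q else 1 - q) * (if σ r then 1/q else 0)))
        = (∏ t, if σ t then q else 1 - q) *
          (∑ r, c r * (if σ r then 1/q else 0)) := by
      rw [Finset.mul_sum]
      exact Finset.sum_congr rfl fun r _ => by ring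
    rw [hA, hB]; ring
  rw [Finset.sum_congr rfl fun σ _ => expand σ, Finset.sum_add_distrib,
    Finset.sum_sub_distrib]
  have h3 : ∑ σ : Fin m → Bool, y ^ 2 * ∏ t, (if σ t then q else 1 - q)
      = y ^ 2 := by
    rw [← Finset.mul_sum, moment0, mul_one]
  have h2 : ∑ σ : Fin m → Bool, 2 * y * (∑ r, c r *
        ((∏ t, if σ t then q else 1 - q) * (if σ r then 1/q else 0)))
      = 2 * y * ∑ r, c r := by
    rw [← Finset.mul_sum, Finset.sum_comm]
    congr 1
    refine Finset.sum_congr rfl fun r _ => ?_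
    rw [← Finset.mul_sum, moment1 q hq r, mul_one]
  have h1 : ∑ σ : Fin m → Bool, (∑ r, ∑ s, c r * c s *
        ((∏ t, if σ t then q else 1 - q) *
          ((if σ r then 1/q else 0) * (if σ s then 1/q else 0))))
      = ∑ r, ∑ s, c r * c s * (if r = s then 1/q else 1) := by
    rw [Finset.sum_comm]
    refine Finset.sum_congr rfl fun r _ => ?_
    rw [Finset.sum_comm]
    refine Finset.sum_congr rfl fun s _ => ?_
    rw [← Finset.mul_sum, moment2 q hq r s]
  rw [h1, h2, h3]
  have h4 : ∑ r, ∑ s, c r * c s * (if r = s then 1/q else 1)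
      = (∑ r, c r) ^ 2 + (1/q - 1) * ∑ r, c r ^ 2 := by
    have hrow : ∀ r, ∑ s, c r * c s * (if r = s then 1/q else 1)
        = (∑ s, c r * c s) + c r ^ 2 * (1/q - 1) := by
      intro r
      have : ∀ s : Fin m, c r * c s * (if r = s then 1/q else 1)
          = c r * c s + (if s = r then c r ^ 2 * (1/q - 1) else 0) := by
        intro s
        by_cases h : r = s
        · subst h; simp; ring
        · simp [h, Ne.symm h]
      rw [Finset.sum_congr rfl fun s _ => this s, Finset.sum_add_distrib,
        Finset.sum_ite_eq' Finset.univ r (fun _ => c r ^ 2 * (1/q - 1)),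
        if_pos (Finset.mem_univ r)]
    rw [Finset.sum_congr rfl fun r _ => hrow r, Finset.sum_add_distrib,
      sq (∑ r, c r), Finset.sum_mul_sum, ← Finset.sum_mul, mul_comm]
  rw [h4]
  have hq' : (1/q - 1) = (1 - q)/q := by field_simp
  rw [hq']; ring


/-- For every weight matrix `W`, the dropout loss decomposes as the
classical loss plus an explicit regularizer:
`L(W) = L̂(W) + (1−q)/(2mq) · Σ_i Σ_r φ(w_r^⊤ x_i)²`. -/
theorem dropout_loss_decomposition (m d n : ℕ) (hm : 0 < m)
    (q : ℝ) (hq0 : 0 < q) (hq1 : q ≤ 1)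
    (a : Fin m → ℝ) (ha : ∀ r, a r = 1 ∨ a r = -1)
    (x : Fin n → Fin d → ℝ) (y : Fin n → ℝ) (W : Fin m → Fin d → ℝ) :
    dropoutLoss m d n q a x y W
      = classicalLoss m d n a x y W
        + (1 - q) / (2 * m * q) * ∑ i, ∑ r, relu (∑ k, W r k * x i k) ^ 2 := by
  have hq : q ≠ 0 := ne_of_gt hq0
  have hmR : (m : ℝ) ≠ 0 := Nat.cast_ne_zero.mpr hm.ne'
  set c : Fin n → Fin m → ℝ :=
    fun i r => (1 / Real.sqrt m) * (a r * relu (∑ k, W r k * x i k)) with hc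
  have hnet : ∀ (σ : Fin m → Bool) (i : Fin n),
      dropoutNet m d q a σ W (x i)
        = ∑ r, c i r * (if σ r then 1/q else 0) := by
    intro σ i
    rw [dropoutNet, Finset.mul_sum]
    exact Finset.sum_congr rfl fun r _ => by rw [hc]; ring
  have htwo : ∀ i : Fin n, twoNet m d a W (x i) = ∑ r, c i r := by
    intro i
    rw [twoNet, Finset.mul_sum]
  have key : ∀ i : Fin n,
      ∑ σ : Fin m → Bool, (∏ r, if σ r then q else 1 - q) *
        (dropoutNet m d q a σ W (x i) - y i) ^ 2
      = (twoNet m d a W (x i) - y i) ^ 2 + (1 - q)/q * ∑ r, c i r ^ 2 := by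
    intro i
    rw [Finset.sum_congr rfl fun σ _ => by rw [hnet σ i], exp_sq q hq (c i) (y i),
      htwo i]
  have hcsq : ∀ i r, c i r ^ 2 = (1 / m) * relu (∑ k, W r k * x i k) ^ 2 := by
    intro i r
    have hs : (1 / Real.sqrt m) ^ 2 = 1 / m := by
      rw [div_pow, one_pow, Real.sq_sqrt (Nat.cast_nonneg m)]
    have ha2 : a r ^ 2 = 1 := by rcases ha r with h | h <;> rw [h] <;> norm_num
    rw [hc, mul_pow, mul_pow, hs, ha2, one_mul]
  rw [dropoutLoss, classicalLoss]
  have swap : ∑ σ : Fin m → Bool, (∏ r, if σ r then q else 1 - q) *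
        ∑ i, (dropoutNet m d q a σ W (x i) - y i) ^ 2
      = ∑ i, ∑ σ : Fin m → Bool, (∏ r, if σ r then q else 1 - q) *
        (dropoutNet m d q a σ W (x i) - y i) ^ 2 := by
    rw [Finset.sum_comm]
    exact Finset.sum_congr rfl fun σ _ => Finset.mul_sum _ _ _
  rw [swap, Finset.sum_congr rfl fun i _ => key i, Finset.sum_add_distrib, mul_add]
  congr 1
  rw [← Finset.mul_sum]
  rw [Finset.sum_congr rfl fun i _ => Finset.sum_congr rfl fun r _ => hcsq i r]
  rw [Finset.sum_congr rfl (fun i _ => (Finset.mul_sum _ _ _).symm), ← Finset.mul_sum,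
    ← mul_assoc, ← mul_assoc]
  congr 1
  field_simp
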